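/- Let g : ℝ × E → 𝔸 be twice continuously differentiable with g(t,x) a unit of 𝔸 for every (t,x), let c : ℝ × E → 𝔸 be continuously differentiable, fix v ∈ E, and set W(t,x) := (∂_t g)(t,x) · g(t,x)⁻¹ and A(t,x) := g(t,x)⁻¹ · c(t,x) · g(t,x) + g(t,x)⁻¹ · (∂_v g)(t,x). Then for every (t,x), (∂_t A)(t,x) = g(t,x)⁻¹ · ( (∂_t c)(t,x) + [c(t,x), W(t,x)] + (∂_v W)(t,x) ) · g(t,x). (This is identity (a20) of Lemma 9.4: the time derivative of the gauge transform C^g = g⁻¹Cg + g⁻¹dg equals g⁻¹(C′ + [C,V] + dV)g with V = g′g⁻¹.) -/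

import Mathlib

noncomputable section

/-- `W(t,x) = ∂_t g(t,x) · g(t,x)⁻¹` (the paper's `V = g′g⁻¹`). -/
def Wfun {E : Type*} [NormedAddCommGroup E] [NormedSpace ℝ E]
    {𝔸 : Type*} [NormedRing 𝔸] [NormedAlgebra ℝ 𝔸]
    (g : ℝ × E → 𝔸) (t : ℝ) (x : E) : 𝔸 :=
  deriv (fun τ => g (τ, x)) t * Ring.inverse (g (t, x))

/-- The gauge transform `A = g⁻¹ c g + g⁻¹ ∂_v g`. -/
def Afun {E : Type*} [NormedAddCommGroup E] [NormedSpace ℝ E]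
    {𝔸 : Type*} [NormedRing 𝔸] [NormedAlgebra ℝ 𝔸]
    (g c : ℝ × E → 𝔸) (v : E) (t : ℝ) (x : E) : 𝔸 :=
  Ring.inverse (g (t, x)) * c (t, x) * g (t, x)
    + Ring.inverse (g (t, x)) * fderiv ℝ (fun y => g (t, y)) x v

/-- Identity (a20) of Lemma 9.4: `(C^g)′ = g⁻¹ (C′ + [C, V] + dV) g` with
`V = g′g⁻¹`, for the gauge transform `C^g = g⁻¹Cg + g⁻¹dg`. -/
theorem stmt_10 {E : Type*} [NormedAddCommGroup E] [NormedSpace ℝ E]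
    {𝔸 : Type*} [NormedRing 𝔸] [NormedAlgebra ℝ 𝔸] [CompleteSpace 𝔸]
    (g c : ℝ × E → 𝔸) (hg : ContDiff ℝ 2 g) (hc : ContDiff ℝ 1 c)
    (hunit : ∀ p : ℝ × E, IsUnit (g p)) (v : E) (t : ℝ) (x : E) :
    deriv (fun τ => Afun g c v τ x) t =
      Ring.inverse (g (t, x)) *
        (deriv (fun τ => c (τ, x)) t
          + (c (t, x) * Wfun g t x - Wfun g t x * c (t, x))
          + fderiv ℝ (fun y => Wfun g t y) x v) * g (t, x) := by
  have hgd : Differentiable ℝ g := hg.differentiable two_ne_zero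
  have hcd : Differentiable ℝ c := hc.differentiable one_ne_zero
  -- curves
  have hcurve : ∀ (τ : ℝ) (y : E), HasDerivAt (fun s : ℝ => (s, y)) ((1 : ℝ), (0 : E)) τ :=
    fun τ y => (hasDerivAt_id τ).prodMk (hasDerivAt_const τ y)
  have hins : ∀ (τ : ℝ) (y : E), HasFDerivAt (fun z : E => (τ, z))
      (((0 : E →L[ℝ] ℝ)).prod (ContinuousLinearMap.id ℝ E)) y :=
    fun τ y => (hasFDerivAt_const τ y).prodMk (hasFDerivAt_id y)
  -- time partial of g
  have hGt : ∀ (τ : ℝ) (y : E),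
      HasDerivAt (fun s => g (s, y)) (fderiv ℝ g (τ, y) (1, 0)) τ :=
    fun τ y => (hgd (τ, y)).hasFDerivAt.comp_hasDerivAt τ (hcurve τ y)
  -- time partial of c
  have hCt : HasDerivAt (fun s => c (s, x)) (fderiv ℝ c (t, x) (1, 0)) t :=
    (hcd (t, x)).hasFDerivAt.comp_hasDerivAt t (hcurve t x)
  -- spatial partial of g
  have hGv : ∀ (τ : ℝ) (y : E), HasFDerivAt (fun z => g (τ, z))
      ((fderiv ℝ g (τ, y)).comp (((0 : E →L[ℝ] ℝ)).prod (ContinuousLinearMap.id ℝ E))) y :=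
    fun τ y => (hgd (τ, y)).hasFDerivAt.comp y (hins τ y)
  have hGv' : ∀ (τ : ℝ) (y : E),
      fderiv ℝ (fun z => g (τ, z)) y v = fderiv ℝ g (τ, y) (0, v) := by
    intro τ y
    rw [(hGv τ y).fderiv]
    simp
  -- derivative of the inverse
  have hinv : ∀ p : ℝ × E, HasFDerivAt (Ring.inverse : 𝔸 → 𝔸)
      (-ContinuousLinearMap.mulLeftRight ℝ 𝔸 (Ring.inverse (g p)) (Ring.inverse (g p)))
      (g p) := by
    intro p
    have h := hasFDerivAt_ringInverse (𝕜 := ℝ) (hunit p).unit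
    rwa [← Ring.inverse_unit (hunit p).unit, (hunit p).unit_spec] at h
  -- time derivative of the inverse
  have hBt : ∀ (τ : ℝ) (y : E), HasDerivAt (fun s => Ring.inverse (g (s, y)))
      (-(Ring.inverse (g (τ, y)) * fderiv ℝ g (τ, y) (1, 0) * Ring.inverse (g (τ, y)))) τ := by
    intro τ y
    have h := (hinv (τ, y)).comp_hasDerivAt τ (hGt τ y)
    exact h
  -- spatial derivative of the inverse
  have hBv : ∀ (τ : ℝ) (y : E), HasFDerivAt (fun z => Ring.inverse (g (τ, z)))
      ((-ContinuousLinearMap.mulLeftRight ℝ 𝔸 (Ring.inverse (g (τ, y)))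
          (Ring.inverse (g (τ, y)))).comp
        ((fderiv ℝ g (τ, y)).comp (((0 : E →L[ℝ] ℝ)).prod (ContinuousLinearMap.id ℝ E)))) y :=
    fun τ y => by have h := (hinv (τ, y)).comp y (hGv τ y); exact h
  -- second derivative of g
  have hF : ContDiff ℝ 1 (fderiv ℝ g) := hg.fderiv_right (by norm_num)
  have hFd : Differentiable ℝ (fderiv ℝ g) := hF.differentiable one_ne_zero
  have hFt : HasDerivAt (fun s => fderiv ℝ g (s, x))
      (fderiv ℝ (fderiv ℝ g) (t, x) (1, 0)) t :=
    (hFd (t, x)).hasFDerivAt.comp_hasDerivAt t (hcurve t x)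
  -- time derivative of ∂_v g
  have h4 : HasDerivAt (fun s => fderiv ℝ g (s, x) (0, v))
      (fderiv ℝ (fderiv ℝ g) (t, x) (1, 0) (0, v)) t := by
    have h := (ContinuousLinearMap.apply ℝ 𝔸 (((0 : ℝ), v))).hasFDerivAt.comp_hasDerivAt t hFt
    exact h
  -- spatial derivative of ∂_t g
  have hFv : HasFDerivAt (fun y => fderiv ℝ g (t, y))
      ((fderiv ℝ (fderiv ℝ g) (t, x)).comp
        (((0 : E →L[ℝ] ℝ)).prod (ContinuousLinearMap.id ℝ E))) x :=
    (hFd (t, x)).hasFDerivAt.comp x (hins t x)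
  have h5 : HasFDerivAt (fun y => fderiv ℝ g (t, y) (1, 0))
      ((ContinuousLinearMap.apply ℝ 𝔸 (((1 : ℝ), (0 : E)))).comp
        ((fderiv ℝ (fderiv ℝ g) (t, x)).comp
          (((0 : E →L[ℝ] ℝ)).prod (ContinuousLinearMap.id ℝ E)))) x :=
    (ContinuousLinearMap.apply ℝ 𝔸 (((1 : ℝ), (0 : E)))).hasFDerivAt.comp x hFv
  -- symmetry of second derivatives
  have hsymm : fderiv ℝ (fderiv ℝ g) (t, x) (1, 0) (0, v)
      = fderiv ℝ (fderiv ℝ g) (t, x) (0, v) (1, 0) :=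
    (hg.contDiffAt.isSymmSndFDerivAt (by simp)) (1, 0) (0, v)
  -- notation
  set a : 𝔸 := Ring.inverse (g (t, x)) with ha
  set G : 𝔸 := g (t, x) with hGdef
  set C : 𝔸 := c (t, x) with hCdef
  set Gt : 𝔸 := fderiv ℝ g (t, x) (1, 0) with hGtdef
  set Gv : 𝔸 := fderiv ℝ g (t, x) (0, v) with hGvdef
  set ct : 𝔸 := fderiv ℝ c (t, x) (1, 0) with hctdef
  set M : 𝔸 := fderiv ℝ (fderiv ℝ g) (t, x) (1, 0) (0, v) with hMdef
  have hBG : a * G = 1 := Ring.inverse_mul_cancel _ (hunit (t, x))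
  -- the Wfun rewrite
  have hWeq : (fun y => Wfun g t y)
      = fun y => fderiv ℝ g (t, y) (1, 0) * Ring.inverse (g (t, y)) := by
    funext y
    rw [Wfun, (hGt t y).deriv]
  -- fderiv of W
  have hWv : fderiv ℝ (fun y => Wfun g t y) x v
      = Gt * (-(a * Gv * a)) + M * a := by
    have hm : HasFDerivAt (fun y => fderiv ℝ g (t, y) (1, 0) * Ring.inverse (g (t, y))) _ x :=
      h5.mul' (hBv t x)
    rw [hWeq, (hm.fderiv)]
    simp [hsymm, mul_assoc]
    rfl
  -- value of Wfun at (t,x)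
  have hW0 : Wfun g t x = Gt * a := by
    rw [Wfun, (hGt t x).deriv]
  -- derivative of A
  have hAeq : (fun τ => Afun g c v τ x)
      = fun τ => Ring.inverse (g (τ, x)) * c (τ, x) * g (τ, x)
          + Ring.inverse (g (τ, x)) * fderiv ℝ g (τ, x) (0, v) := by
    funext τ
    rw [Afun, hGv' τ x]
  have hA : HasDerivAt (fun τ => Afun g c v τ x)
      (((-(a * Gt * a)) * C + a * ct) * G + (a * C) * Gt
        + ((-(a * Gt * a)) * Gv + a * M)) t := by
    rw [hAeq]
    exact (((hBt t x).mul hCt).mul (hGt t x)).add ((hBt t x).mul h4)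
  rw [hA.deriv, hCt.deriv, hW0, hWv]
  simp only [mul_add, add_mul, mul_sub, sub_mul, neg_mul, mul_neg, mul_assoc, mul_one, one_mul,
    hBG]
  abel
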